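/- Let Φ be a real N×n matrix whose columns are pairwise orthogonal and all have Euclidean norm c > 0 (necessarily n ≤ N). Then all n singular values of Φ equal c, and consequently for any matrix Ψ with the same number n of columns and any set of n positive singular values with the same sum of squares n·c², one has Σ_k 1/σ_k(Ψ)² ≥ Σ_k 1/σ_k(Φ)² = n/c². -/

import Mathlib

open Matrix

/-- `σ` lists the singular values of the real matrix `A` (square roots of the
eigenvalues of `AᴴA`) in decreasing order. -/
def IsSingularValues {M n : ℕ} (A : Matrix (Fin M) (Fin n) ℝ) (σ : Fin n → ℝ) : Prop :=
  Antitone σ ∧ (∀ i, 0 ≤ σ i) ∧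
    ∃ e : Equiv.Perm (Fin n),
      ∀ i, σ i ^ 2 = (Matrix.isHermitian_conjTranspose_mul_self A).eigenvalues (e i)

lemma eigenvalues_smul_one {n : ℕ} (r : ℝ) (A : Matrix (Fin n) (Fin n) ℝ)
    (hA : A.IsHermitian) (h : A = r • 1) (i : Fin n) : hA.eigenvalues i = r := by
  subst h
  have hv := hA.mulVec_eigenvectorBasis i
  have hne : ⇑(hA.eigenvectorBasis i) ≠ 0 := by
    intro h0; apply hA.eigenvectorBasis.orthonormal.ne_zero i; ext j; simpa using congrFun h0 j
  have hv' : r • ⇑(hA.eigenvectorBasis i) = hA.eigenvalues i • ⇑(hA.eigenvectorBasis i) := by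
    simpa [Matrix.smul_mulVec, Matrix.one_mulVec] using hv
  by_contra hne'
  have h0 : (r - hA.eigenvalues i) • ⇑(hA.eigenvectorBasis i) = 0 := by
    rw [sub_smul, hv', sub_self]
  exact hne ((smul_eq_zero.mp h0).resolve_left (sub_ne_zero.mpr fun he => hne' he.symm))

/-- A matrix with pairwise orthogonal columns of common norm `c > 0` has all its
singular values equal to `c` (so `Σ 1/σ_k² = n/c²`), and this choice is variance
optimal: any matrix `Ψ` with `n` columns, positive singular values and the same sum of
squared singular values `n·c²` satisfies `Σ 1/σ_k(Ψ)² ≥ n/c²`. -/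
theorem orthogonal_columns_variance_optimal {N n : ℕ}
    (Φ : Matrix (Fin N) (Fin n) ℝ) (c : ℝ) (hc : 0 < c)
    (hcols : ∀ j l : Fin n, (∑ i, Φ i j * Φ i l) = if j = l then c ^ 2 else 0) :
    (∀ σ : Fin n → ℝ, IsSingularValues Φ σ →
        (∀ k, σ k = c) ∧ (∑ k, (σ k ^ 2)⁻¹) = n / c ^ 2) ∧
      (∀ (M : ℕ) (Ψ : Matrix (Fin M) (Fin n) ℝ) (τ : Fin n → ℝ),
        IsSingularValues Ψ τ → (∀ k, 0 < τ k) → (∑ k, τ k ^ 2) = n * c ^ 2 →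
          (∑ k, (τ k ^ 2)⁻¹) ≥ n / c ^ 2) := by
  constructor
  · intro σ hσ
    obtain ⟨-, hσ0, e, he⟩ := hσ
    have hΦ : Φᵀ * Φ = (c ^ 2) • 1 := by
      ext j l
      simp only [Matrix.mul_apply, Matrix.transpose_apply, Matrix.smul_apply,
        Matrix.one_apply, smul_eq_mul]
      rw [hcols j l]
      by_cases h : j = l <;> simp [h]
    have hkey : ∀ k, σ k = c := by
      intro k
      have h2 : σ k ^ 2 = c ^ 2 := by
        rw [he k, eigenvalues_smul_one (c ^ 2) (Φᴴ * Φ) _ (by rw [conjTranspose_eq_transpose_of_trivial]; exact hΦ)]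
      exact (sq_eq_sq₀ (hσ0 k) hc.le).mp h2
    refine ⟨hkey, ?_⟩
    simp only [hkey]
    rw [Finset.sum_const, Finset.card_univ, Fintype.card_fin, nsmul_eq_mul, div_eq_mul_inv]
  · intro M Ψ τ hτ hτpos hsum
    have hcs := Finset.sum_mul_sq_le_sq_mul_sq Finset.univ τ (fun k => (τ k)⁻¹)
    have hlhs : (∑ k, τ k * (τ k)⁻¹) = (n : ℝ) := by
      rw [Finset.sum_congr rfl fun k _ => mul_inv_cancel₀ (hτpos k).ne']
      simp
    rw [hlhs, hsum] at hcs
    have hinv : ∀ k, (τ k)⁻¹ ^ 2 = (τ k ^ 2)⁻¹ := fun k => by rw [inv_pow]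
    simp only [hinv] at hcs
    rcases Nat.eq_zero_or_pos n with hn | hn
    · subst hn; simp
    · have hn' : (0 : ℝ) < n := by exact_mod_cast hn
      rw [ge_iff_le, div_le_iff₀ (by positivity)]
      nlinarith [hcs]
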